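/- Let (V, ⟨·,·⟩, R) be a Riemannian model of dimension m whose Ricci operator equals s·id for some s ∈ ℝ. Let {e₁,…,e_m} be a ⟨·,·⟩-orthonormal basis of V. On U := V ⊕ V, writing x⁺ := (x,0) and x⁻ := (0,x) for x ∈ V, define the symmetric bilinear form ⟨·,·⟩' by ⟨x⁺,y⁺⟩' = ⟨x,y⟩, ⟨x⁻,y⁻⟩' = −⟨x,y⟩, ⟨x⁺,y⁻⟩' = 0, and define the multilinear map S : U⁴ → ℝ by S(x₁^{ε₁},x₂^{ε₂},x₃^{ε₃},x₄^{ε₄}) := 0 if the number of minus signs among ε₁,…,ε₄ is even, := R(x₁,x₂,x₃,x₄) if exactly one of the εᵢ is minus, and := −R(x₁,x₂,x₃,x₄) if exactly three of the εᵢ are minus. Then 𝔑 := (U, ⟨·,·⟩', S) is a model (⟨·,·⟩' is nondegenerate of signature (m,m) and S is an algebraic curvature tensor), 𝔑 is Jacobi–Videv, and its Ricci operator ρ_𝔑 satisfies ρ_𝔑² = −4s²·id. -/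

import Mathlib

/-- From a Riemannian Einstein model (V, ⟨·,·⟩, R) with Ricci operator
s·id, the "imaginary part of the complexification" construction on U := V ⊕ V yields a
model 𝔑 = (U, ⟨·,·⟩', S) of neutral signature (m,m) which is Jacobi–Videv and whose
Ricci operator satisfies ρ_𝔑² = −4s²·id.  An element (x, y) of V × V represents
x⁺ + y⁻. -/

noncomputable def c4aux {V : Type*} [AddCommGroup V] [Module ℝ V]
    (R : V →ₗ[ℝ] V →ₗ[ℝ] V →ₗ[ℝ] V →ₗ[ℝ] ℝ)
    (f g h k : (V × V) →ₗ[ℝ] V) :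
    (V × V) →ₗ[ℝ] (V × V) →ₗ[ℝ] (V × V) →ₗ[ℝ] (V × V) →ₗ[ℝ] ℝ :=
  (LinearMap.llcomp ℝ (V × V) _ _
      (LinearMap.llcomp ℝ (V × V) _ _ (LinearMap.lcomp ℝ ℝ k))) ∘ₗ
    ((LinearMap.llcomp ℝ (V × V) _ _ (LinearMap.lcomp ℝ (V →ₗ[ℝ] ℝ) h)) ∘ₗ
      ((LinearMap.lcomp ℝ (V →ₗ[ℝ] V →ₗ[ℝ] ℝ) g) ∘ₗ (R ∘ₗ f)))

lemma c4aux_apply {V : Type*} [AddCommGroup V] [Module ℝ V]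
    (R : V →ₗ[ℝ] V →ₗ[ℝ] V →ₗ[ℝ] V →ₗ[ℝ] ℝ)
    (f g h k : (V × V) →ₗ[ℝ] V) (u₁ u₂ u₃ u₄ : V × V) :
    c4aux R f g h k u₁ u₂ u₃ u₄ = R (f u₁) (g u₂) (h u₃) (k u₄) := rfl

set_option maxHeartbeats 1000000 in
set_option maxRecDepth 8000 in
theorem stmt12 {V : Type*} [AddCommGroup V] [Module ℝ V] [FiniteDimensional ℝ V]
    {m : ℕ}
    (B : V →ₗ[ℝ] V →ₗ[ℝ] ℝ)
    (hBsymm : ∀ x y, B x y = B y x)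
    (hBpos : ∀ x, x ≠ 0 → 0 < B x x)
    (R : V →ₗ[ℝ] V →ₗ[ℝ] V →ₗ[ℝ] V →ₗ[ℝ] ℝ)
    (hR1 : ∀ x y z w, R x y z w = -R y x z w)
    (hR2 : ∀ x y z w, R x y z w = R z w x y)
    (hR3 : ∀ x y z w, R x y z w + R y z x w + R z x y w = 0)
    (e : Module.Basis (Fin m) ℝ V)
    (he : ∀ i j, B (e i) (e j) = if i = j then (1 : ℝ) else 0)
    (s : ℝ)
    (hEin : ∀ x y, (∑ i, R x (e i) (e i) y) = s * B x y) :
    ∃ (B' : (V × V) →ₗ[ℝ] (V × V) →ₗ[ℝ] ℝ)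
      (S : (V × V) →ₗ[ℝ] (V × V) →ₗ[ℝ] (V × V) →ₗ[ℝ] (V × V) →ₗ[ℝ] ℝ)
      (ρN : (V × V) →ₗ[ℝ] (V × V)),
      -- the inner product ⟨·,·⟩' on U = V ⊕ V
      (∀ u v : V × V, B' u v = B u.1 v.1 - B u.2 v.2) ∧
      (∀ u v : V × V, B' u v = B' v u) ∧
      (∀ u : V × V, (∀ v, B' u v = 0) → u = 0) ∧
      -- ⟨·,·⟩' has signature (m,m): {x⁺} ∪ {x⁻} built from e is an orthonormal basis
      (∀ u v : Fin m ⊕ Fin m,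
        B' ((e.prod e) u) ((e.prod e) v) =
          if u = v then (Sum.elim (fun _ => (1 : ℝ)) (fun _ => (-1 : ℝ)) u) else 0) ∧
      -- the tensor S (multilinear extension of: 0 for an even number of minus slots,
      -- R for exactly one minus slot, −R for exactly three minus slots)
      (∀ u₁ u₂ u₃ u₄ : V × V, S u₁ u₂ u₃ u₄ =
          (R u₁.2 u₂.1 u₃.1 u₄.1 + R u₁.1 u₂.2 u₃.1 u₄.1
            + R u₁.1 u₂.1 u₃.2 u₄.1 + R u₁.1 u₂.1 u₃.1 u₄.2)
        - (R u₁.1 u₂.2 u₃.2 u₄.2 + R u₁.2 u₂.1 u₃.2 u₄.2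
            + R u₁.2 u₂.2 u₃.1 u₄.2 + R u₁.2 u₂.2 u₃.2 u₄.1)) ∧
      -- S is an algebraic curvature tensor
      (∀ a b c d : V × V, S a b c d = -S b a c d) ∧
      (∀ a b c d : V × V, S a b c d = S c d a b) ∧
      (∀ a b c d : V × V, S a b c d + S b c a d + S c a b d = 0) ∧
      -- ρN is the Ricci operator of 𝔑 (w.r.t. the orthonormal basis above)
      (∀ u v : V × V, B' (ρN u) v =
        (∑ i, S u (e i, 0) (e i, 0) v) - ∑ i, S u (0, e i) (0, e i) v) ∧
      -- 𝔑 is Jacobi–Videv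
      (∀ JS : (V × V) → (V × V) →ₗ[ℝ] (V × V),
        (∀ x y z, B' (JS x y) z = S y x x z) → ∀ x, (JS x) ∘ₗ ρN = ρN ∘ₗ (JS x)) ∧
      -- ρ_𝔑² = −4s²·id
      (ρN ∘ₗ ρN = (-(4 * s ^ 2)) • LinearMap.id) := by
  set p₁ : (V × V) →ₗ[ℝ] V := LinearMap.fst ℝ V V with hp₁
  set p₂ : (V × V) →ₗ[ℝ] V := LinearMap.snd ℝ V V with hp₂
  refine ⟨(B.compl₁₂ p₁ p₁) - (B.compl₁₂ p₂ p₂),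
    ((c4aux R p₂ p₁ p₁ p₁ + c4aux R p₁ p₂ p₁ p₁)
      + (c4aux R p₁ p₁ p₂ p₁ + c4aux R p₁ p₁ p₁ p₂))
      + ((c4aux R (-p₁) p₂ p₂ p₂ + c4aux R (-p₂) p₁ p₂ p₂)
      + (c4aux R (-p₂) p₂ p₁ p₂ + c4aux R (-p₂) p₂ p₂ p₁)),
    ((2*s) • p₂).prod ((-(2*s)) • p₁), ?_⟩
  set B' : (V × V) →ₗ[ℝ] (V × V) →ₗ[ℝ] ℝ := (B.compl₁₂ p₁ p₁) - (B.compl₁₂ p₂ p₂)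
    with hB'
  set S : (V × V) →ₗ[ℝ] (V × V) →ₗ[ℝ] (V × V) →ₗ[ℝ] (V × V) →ₗ[ℝ] ℝ :=
    ((c4aux R p₂ p₁ p₁ p₁ + c4aux R p₁ p₂ p₁ p₁)
      + (c4aux R p₁ p₁ p₂ p₁ + c4aux R p₁ p₁ p₁ p₂))
      + ((c4aux R (-p₁) p₂ p₂ p₂ + c4aux R (-p₂) p₁ p₂ p₂)
      + (c4aux R (-p₂) p₂ p₁ p₂ + c4aux R (-p₂) p₂ p₂ p₁)) with hS
  set ρN : (V × V) →ₗ[ℝ] (V × V) := ((2*s) • p₂).prod ((-(2*s)) • p₁) with hρ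
  have hB'app : ∀ u v : V × V, B' u v = B u.1 v.1 - B u.2 v.2 := by
    intro u v
    simp [hB', hp₁, hp₂, LinearMap.compl₁₂_apply]
  have hSapp : ∀ u₁ u₂ u₃ u₄ : V × V, S u₁ u₂ u₃ u₄ =
      (R u₁.2 u₂.1 u₃.1 u₄.1 + R u₁.1 u₂.2 u₃.1 u₄.1
        + R u₁.1 u₂.1 u₃.2 u₄.1 + R u₁.1 u₂.1 u₃.1 u₄.2)
      - (R u₁.1 u₂.2 u₃.2 u₄.2 + R u₁.2 u₂.1 u₃.2 u₄.2
        + R u₁.2 u₂.2 u₃.1 u₄.2 + R u₁.2 u₂.2 u₃.2 u₄.1) := by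
    intro u₁ u₂ u₃ u₄
    simp [hS, c4aux_apply, hp₁, hp₂, map_neg, LinearMap.neg_apply]
    have hn : ∀ x a b c : V, R (-x) a b c = -R x a b c := by
      intro x a b c; rw [← neg_one_smul ℝ x, map_smul]; simp
    simp only [hn]
    ring
  have hρapp : ∀ u : V × V, ρN u = ((2*s) • u.2, (-(2*s)) • u.1) := by
    intro u; simp [hρ, hp₁, hp₂]
  have hBzero : ∀ x : V, B x x = 0 → x = 0 := by
    intro x hx
    by_contra h
    exact absurd hx (ne_of_gt (hBpos x h))
  have hnd : ∀ u : V × V, (∀ v, B' u v = 0) → u = 0 := by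
    intro u hu
    have h1 : B u.1 u.1 = 0 := by
      have := hu (u.1, 0); rw [hB'app] at this; simpa using this
    have h2 : B u.2 u.2 = 0 := by
      have := hu (0, u.2); rw [hB'app] at this; simpa using this
    have := hBzero _ h1
    have := hBzero _ h2
    exact Prod.ext ‹u.1 = 0› ‹u.2 = 0›
  have hSA : ∀ u v : V × V, B' (ρN u) v = B' u (ρN v) := by
    intro u v
    rw [hB'app, hB'app, hρapp, hρapp]
    simp [map_smul, smul_eq_mul]
    ring
  refine ⟨hB'app, ?_, hnd, ?_, hSapp, ?_, ?_, ?_, ?_, ?_, ?_⟩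
  · intro u v; rw [hB'app, hB'app, hBsymm u.1 v.1, hBsymm u.2 v.2]
  · -- orthonormal basis
    intro u v
    rcases u with i | i <;> rcases v with j | j <;>
      rw [hB'app] <;>
      simp only [Module.Basis.prod_apply_inl_fst, Module.Basis.prod_apply_inl_snd,
        Module.Basis.prod_apply_inr_fst, Module.Basis.prod_apply_inr_snd, he, map_zero,
        LinearMap.zero_apply, Sum.elim_inl, Sum.elim_inr, Sum.inl.injEq,
        Sum.inr.injEq, reduceCtorEq, if_false, sub_zero, zero_sub] <;>
      first
        | rfl
        | (split_ifs <;> norm_num)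
        | norm_num
  · -- antisymmetry
    intro a b c d
    rw [hSapp, hSapp]
    linear_combination (hR1 a.2 b.1 c.1 d.1) + (hR1 a.1 b.2 c.1 d.1)
      + (hR1 a.1 b.1 c.2 d.1) + (hR1 a.1 b.1 c.1 d.2)
      - (hR1 a.1 b.2 c.2 d.2) - (hR1 a.2 b.1 c.2 d.2)
      - (hR1 a.2 b.2 c.1 d.2) - (hR1 a.2 b.2 c.2 d.1)
  · -- pair symmetry
    intro a b c d
    rw [hSapp, hSapp]
    linear_combination (hR2 a.2 b.1 c.1 d.1) + (hR2 a.1 b.2 c.1 d.1)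
      + (hR2 a.1 b.1 c.2 d.1) + (hR2 a.1 b.1 c.1 d.2)
      - (hR2 a.1 b.2 c.2 d.2) - (hR2 a.2 b.1 c.2 d.2)
      - (hR2 a.2 b.2 c.1 d.2) - (hR2 a.2 b.2 c.2 d.1)
  · -- Bianchi
    intro a b c d
    rw [hSapp, hSapp, hSapp]
    linear_combination (hR3 a.2 b.1 c.1 d.1) + (hR3 a.1 b.2 c.1 d.1)
      + (hR3 a.1 b.1 c.2 d.1) + (hR3 a.1 b.1 c.1 d.2)
      - (hR3 a.1 b.2 c.2 d.2) - (hR3 a.2 b.1 c.2 d.2)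
      - (hR3 a.2 b.2 c.1 d.2) - (hR3 a.2 b.2 c.2 d.1)
  · -- Ricci operator
    intro u v
    have h1 : ∀ i : Fin m, S u (e i, 0) (e i, 0) v
        = R u.2 (e i) (e i) v.1 + R u.1 (e i) (e i) v.2 := by
      intro i; rw [hSapp]; simp
    have h2 : ∀ i : Fin m, S u (0, e i) (0, e i) v
        = -(R u.1 (e i) (e i) v.2 + R u.2 (e i) (e i) v.1) := by
      intro i; rw [hSapp]; simp; try ring
    rw [Finset.sum_congr rfl (fun i _ => h1 i), Finset.sum_congr rfl (fun i _ => h2 i),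
      Finset.sum_add_distrib, Finset.sum_neg_distrib]
    rw [hB'app, hρapp]
    simp only [map_smul, smul_eq_mul, LinearMap.smul_apply]
    rw [Finset.sum_add_distrib, hEin, hEin]
    ring
  · -- Jacobi–Videv
    intro JS hJS x
    apply LinearMap.ext
    intro y
    have keyS : ∀ z : V × V, B' (JS x (ρN y) - ρN (JS x y)) z = 0 := by
      intro z
      have e1 : B' (JS x (ρN y)) z = S (ρN y) x x z := hJS x (ρN y) z
      have e2 : B' (ρN (JS x y)) z = S y x x (ρN z) := by
        rw [hSA]; exact hJS x y (ρN z)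
      have e3 : S (ρN y) x x z = S y x x (ρN z) := by
        rw [hSapp, hSapp, hρapp, hρapp]
        simp only [map_smul, smul_eq_mul, LinearMap.smul_apply]
        ring
      rw [map_sub, LinearMap.sub_apply, e1, e2, e3, sub_self]
    have := hnd _ keyS
    exact sub_eq_zero.mp this
  · -- ρN² = -4s² id
    apply LinearMap.ext
    intro u
    rw [LinearMap.comp_apply, hρapp, hρapp]
    simp only [smul_smul, LinearMap.smul_apply, LinearMap.id_apply]
    refine Prod.ext ?_ ?_ <;> simp <;> module
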